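/- Let $G$ be a self-similar subgroup of $\mathrm{Aut}(\mathcal{T}_2)$ acting on the binary rooted tree. If there exist a vertex $v$ of the first level and a nontrivial $g \in G$ fixing pointwise the subtree $v\mathcal{T}_2$, and an element $h \in G$ swapping the two first-level vertices, then the element $M = (1-g)(1-hgh^{-1})$ of the group algebra $\mathbb{C}G$ is nonzero but acts as zero on $\ell^2(\mathcal{T}_2^0)$. -/

import Mathlib

/-- An automorphism of the `d`-regular rooted tree, viewed as a permutation of the vertex set
`(Fin d)*` preserving lengths and the parent relation. -/
def IsTreeAut {d : ℕ} (g : Equiv.Perm (List (Fin d))) : Prop :=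
  (∀ v : List (Fin d), (g v).length = v.length) ∧
  (∀ (v : List (Fin d)) (x : Fin d), ∃ y : Fin d, g (v ++ [x]) = g v ++ [y])

/-- Let `G` be a self-similar group of automorphisms of the binary rooted tree. If a nontrivial
`g ∈ G` fixes pointwise the subtree rooted at a first-level vertex `v`, and `h ∈ G` swaps the two
first-level vertices, then `M = (1-g)(1-hgh⁻¹) ∈ ℂG` is nonzero but acts as zero on
`ℓ²(𝒯₂⁰)` (it kills every Dirac function `δ_z`). -/
theorem nonzero_kernel_element_binary_tree
    (G : Subgroup (Equiv.Perm (List (Fin 2))))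
    (hGaut : ∀ f ∈ G, IsTreeAut f)
    (hself : ∀ f ∈ G, ∀ i : Fin 2, ∃ f' ∈ G, ∀ w : List (Fin 2), f (i :: w) = f [i] ++ f' w)
    (v : Fin 2) (g : Equiv.Perm (List (Fin 2))) (hgG : g ∈ G) (hg1 : g ≠ 1)
    (hgfix : ∀ w : List (Fin 2), g (v :: w) = v :: w)
    (h : Equiv.Perm (List (Fin 2))) (hhG : h ∈ G)
    (hswap : h [0] = [1] ∧ h [1] = [0]) :
    ((1 - MonoidAlgebra.of ℂ _ g) * (1 - MonoidAlgebra.of ℂ _ (h * g * h⁻¹)) ≠ 0) ∧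
    (∀ z : List (Fin 2),
      (((1 - MonoidAlgebra.of ℂ _ g) *
          (1 - MonoidAlgebra.of ℂ _ (h * g * h⁻¹))).coeff.sum
        fun σ c => c • (Pi.single (σ z) 1 : List (Fin 2) → ℂ)) = 0) := by
  have two : ∀ a b : Fin 2, a = b ∨ a = b + 1 := by decide
  have vne : ∀ a : Fin 2, a ≠ a + 1 := by decide
  have gnil : g [] = ([] : List (Fin 2)) :=
    List.length_eq_zero_iff.mp ((hGaut g hgG).1 [])
  have gv : g [v] = [v] := hgfix []
  have gv1 : g [v + 1] = [v + 1] := by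
    obtain ⟨j, hj⟩ := List.length_eq_one_iff.mp ((hGaut g hgG).1 [v + 1])
    rcases two j v with rfl | rfl
    · have := g.injective (hj.trans gv.symm)
      simp at this
    · exact hj
  obtain ⟨g₂, hg₂G, hg₂⟩ := hself g hgG (v + 1)
  have Hg : ∀ w, g ((v + 1) :: w) = (v + 1) :: g₂ w := fun w => by
    rw [hg₂ w, gv1]; rfl
  have hv1 : h [v] = [v + 1] ∧ h [v + 1] = [v] := by
    rcases two v 0 with rfl | rfl
    · norm_num; exact hswap
    · norm_num; exact ⟨hswap.2, hswap.1⟩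
  obtain ⟨h₁, hh₁G, hh₁⟩ := hself h hhG v
  obtain ⟨h₂, hh₂G, hh₂⟩ := hself h hhG (v + 1)
  have Hv : ∀ w, h (v :: w) = (v + 1) :: h₁ w := fun w => by rw [hh₁ w, hv1.1]; rfl
  have Hv1 : ∀ w, h ((v + 1) :: w) = v :: h₂ w := fun w => by rw [hh₂ w, hv1.2]; rfl
  have Hvinv : ∀ w, h⁻¹ ((v + 1) :: w) = v :: h₁.symm w := fun w => by
    have := Hv (h₁.symm w)
    rw [Equiv.apply_symm_apply] at this
    rw [← this, ← Equiv.Perm.mul_apply, inv_mul_cancel, Equiv.Perm.one_apply]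
  have Hv1inv : ∀ w, h⁻¹ (v :: w) = (v + 1) :: h₂.symm w := fun w => by
    have := Hv1 (h₂.symm w)
    rw [Equiv.apply_symm_apply] at this
    rw [← this, ← Equiv.Perm.mul_apply, inv_mul_cancel, Equiv.Perm.one_apply]
  set g' : Equiv.Perm (List (Fin 2)) := h * g * h⁻¹ with hg'
  have FactA : ∀ w, g' ((v + 1) :: w) = (v + 1) :: w := fun w => by
    rw [hg', Equiv.Perm.mul_apply, Equiv.Perm.mul_apply, Hvinv w, hgfix, Hv,
      Equiv.apply_symm_apply]
  have FactB : ∀ w, g' (v :: w) = v :: h₂ (g₂ (h₂.symm w)) := fun w => by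
    rw [hg', Equiv.Perm.mul_apply, Equiv.Perm.mul_apply, Hv1inv w, Hg, Hv1]
  have g'nil : g' [] = ([] : List (Fin 2)) :=
    List.length_eq_zero_iff.mp ((hGaut g' (mul_mem (mul_mem hhG hgG) (inv_mem hhG))).1 [])
  -- distinctness of 1, g, g', g*g'
  have key1 : g * g' ≠ 1 := by
    intro heq
    have hinv : g' = g⁻¹ := by
      have := mul_eq_one_iff_inv_eq.mp heq; rw [← this]
    apply hg1
    refine Equiv.Perm.ext fun x => ?_
    rw [Equiv.Perm.one_apply]
    rcases x with _ | ⟨i, w⟩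
    · exact gnil
    rcases two i v with rfl | rfl
    · exact hgfix w
    · have := FactA w
      rw [hinv] at this
      calc g ((v + 1) :: w) = g (g⁻¹ ((v + 1) :: w)) := by rw [this]
        _ = (v + 1) :: w := by rw [← Equiv.Perm.mul_apply, mul_inv_cancel, Equiv.Perm.one_apply]
  have key2 : g * g' ≠ g := by
    intro heq
    have h1 : g' = 1 := mul_eq_left.mp heq
    apply hg1
    have : g = h⁻¹ * g' * h := by rw [hg']; group
    rw [h1] at this; simpa using this
  have key3 : g * g' ≠ g' := fun heq => hg1 (mul_eq_right.mp heq)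
  have expand : (1 - MonoidAlgebra.of ℂ _ g) * (1 - MonoidAlgebra.of ℂ _ g') =
      MonoidAlgebra.single 1 1 - MonoidAlgebra.single g' 1 - MonoidAlgebra.single g 1
        + MonoidAlgebra.single (g * g') 1 := by
    rw [sub_mul, mul_sub, mul_sub, one_mul, one_mul, mul_one, MonoidAlgebra.of_apply,
      MonoidAlgebra.of_apply, MonoidAlgebra.single_mul_single, one_mul, MonoidAlgebra.one_def]
    abel
  have e1 : (MonoidAlgebra.single (1 : Equiv.Perm (List (Fin 2))) (1 : ℂ)).coeff (g * g') = 0 :=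
    Finsupp.single_eq_of_ne' (Ne.symm key1)
  have e2 : (MonoidAlgebra.single g' (1 : ℂ)).coeff (g * g') = 0 :=
    Finsupp.single_eq_of_ne' (Ne.symm key3)
  have e3 : (MonoidAlgebra.single g (1 : ℂ)).coeff (g * g') = 0 :=
    Finsupp.single_eq_of_ne' (Ne.symm key2)
  have e4 : (MonoidAlgebra.single (g * g') (1 : ℂ)).coeff (g * g') = 1 := Finsupp.single_eq_same
  constructor
  · intro h0
    rw [expand] at h0
    have := congrArg (fun f : MonoidAlgebra ℂ (Equiv.Perm (List (Fin 2))) => f.coeff (g * g')) h0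
    rw [MonoidAlgebra.coeff_add, MonoidAlgebra.coeff_sub, MonoidAlgebra.coeff_sub, Finsupp.add_apply, Finsupp.sub_apply, Finsupp.sub_apply, e1, e2, e3, e4] at this
    simp at this
  · intro z
    rw [← Finsupp.linearCombination_apply, expand, MonoidAlgebra.coeff_add, MonoidAlgebra.coeff_sub,
      MonoidAlgebra.coeff_sub, map_add, map_sub, map_sub]
    simp only [MonoidAlgebra.coeff_single, Finsupp.linearCombination_single, one_smul,
      Equiv.Perm.one_apply, Equiv.Perm.mul_apply]
    rcases z with _ | ⟨i, w⟩
    · rw [g'nil, gnil]; abel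
    rcases two i v with rfl | rfl
    · rw [FactB w, hgfix, hgfix]; abel
    · rw [FactA w, Hg w]; abel
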